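/- ∑_{j=0}^∞ binom(1/2, j)^2 j = 1/π, where binom(1/2, j) is the generalized binomial coefficient. -/

import Mathlib

open scoped Real

/-- The generalized binomial coefficient `r(r-1)⋯(r-j+1)/j!`. -/
noncomputable def gbinom (r : ℝ) (j : ℕ) : ℝ :=
  (∏ k ∈ Finset.range j, (r - k)) / (Nat.factorial j)

namespace Stmt5Aux

open Real Finset intervalIntegral MeasureTheory

/-- normalized central binomial coefficient -/
noncomputable def cb (n : ℕ) : ℝ := (Nat.centralBinom n : ℝ) / 4 ^ n

lemma cb_zero : cb 0 = 1 := by simp [cb, Nat.centralBinom]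

lemma cb_succ (n : ℕ) : cb (n + 1) = (2 * n + 1) / (2 * n + 2) * cb n := by
  have h : ((n : ℝ) + 1) * (Nat.centralBinom (n + 1) : ℝ)
      = 2 * (2 * n + 1) * (Nat.centralBinom n : ℝ) := by
    exact_mod_cast Nat.succ_mul_centralBinom_succ n
  rw [cb, cb]
  have hn : (0:ℝ) < (n : ℝ) + 1 := by positivity
  field_simp
  ring_nf
  ring_nf at h
  nlinarith [h, pow_pos (show (0:ℝ) < 4 by norm_num) n]

lemma cb_nonneg (n : ℕ) : 0 ≤ cb n := by unfold cb; positivity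

lemma cb_sq_le (n : ℕ) : cb n ^ 2 ≤ 1 / (2 * n + 1) := by
  induction n with
  | zero => simp [cb_zero]
  | succ n ih =>
    rw [cb_succ, mul_pow]
    push_cast
    have ih' : (2*(n:ℝ)+1) * cb n ^ 2 ≤ 1 := by
      calc (2*(n:ℝ)+1) * cb n ^2 ≤ (2*(n:ℝ)+1) * (1/(2*n+1)) := by
            exact mul_le_mul_of_nonneg_left ih (by positivity)
        _ = 1 := by field_simp
    rw [div_pow, div_mul_eq_mul_div, le_div_iff₀ (by positivity), div_mul_eq_mul_div,
      div_le_iff₀ (by positivity)]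
    have h := mul_le_mul_of_nonneg_left ih' (show (0:ℝ) ≤ (2*n+1)*(2*n+3) by positivity)
    nlinarith [h]

lemma cb_le (n : ℕ) : cb n ≤ 1 / Real.sqrt ((n : ℝ) + 1) := by
  have h1 : cb n ^ 2 ≤ (1 / Real.sqrt ((n:ℝ)+1)) ^ 2 := by
    rw [div_pow, one_pow, Real.sq_sqrt (by positivity)]
    refine (cb_sq_le n).trans ?_
    exact one_div_le_one_div_of_le (by positivity) (by push_cast; linarith)
  calc cb n = Real.sqrt (cb n ^ 2) := (Real.sqrt_sq (cb_nonneg n)).symm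
    _ ≤ Real.sqrt ((1 / Real.sqrt ((n:ℝ)+1)) ^ 2) := Real.sqrt_le_sqrt h1
    _ = 1 / Real.sqrt ((n:ℝ)+1) := Real.sqrt_sq (by positivity)


/-- Wallis integral -/
lemma wallis (n : ℕ) : (∫ x in (0:ℝ)..(π/2), Real.sin x ^ (2 * n)) = π / 2 * cb n := by
  induction n with
  | zero => simp [cb_zero]
  | succ n ih =>
    have h2 : 2 * (n + 1) = 2 * n + 2 := by ring
    rw [h2, integral_sin_pow, ih, cb_succ]
    simp [Real.sin_pi_div_two, Real.cos_pi_div_two]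
    push_cast
    ring

lemma gbinom_succ (r : ℝ) (j : ℕ) : gbinom r (j + 1) = gbinom r j * (r - j) / (j + 1) := by
  unfold gbinom
  rw [Finset.prod_range_succ, Nat.factorial_succ]
  have h1 : ((j.factorial : ℝ)) ≠ 0 := by exact_mod_cast j.factorial_ne_zero
  have h2 : ((j : ℝ) + 1) ≠ 0 := by positivity
  push_cast
  field_simp

lemma gbinom_formula (n : ℕ) :
    gbinom (1/2) (n + 1) = (-1) ^ n * (Nat.centralBinom n : ℝ) / (2 * 4 ^ n * (n + 1)) := by
  induction n with
  | zero => simp [gbinom, Nat.centralBinom]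
  | succ n ih =>
    have h : ((n : ℝ) + 1) * (Nat.centralBinom (n + 1) : ℝ)
        = 2 * (2 * n + 1) * (Nat.centralBinom n : ℝ) := by
      exact_mod_cast Nat.succ_mul_centralBinom_succ n
    have hn : ((n : ℝ) + 1) ≠ 0 := by positivity
    have hB' : (Nat.centralBinom (n+1) : ℝ)
        = 2 * (2 * n + 1) * (Nat.centralBinom n : ℝ) / ((n : ℝ) + 1) := by
      field_simp
      linear_combination h
    rw [gbinom_succ, ih, hB']
    push_cast
    field_simp
    ring

lemma catalan_div4 (n : ℕ) : (catalan n : ℝ) / 4 ^ n = cb n / ((n : ℝ) + 1) := by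
  have h : ((n : ℝ) + 1) * (catalan n : ℝ) = (Nat.centralBinom n : ℝ) := by
    exact_mod_cast succ_mul_catalan_eq_centralBinom n
  rw [cb]
  have hn : ((n : ℝ) + 1) ≠ 0 := by positivity
  field_simp
  linear_combination h

/-- the dominating sequence -/
noncomputable def u (n : ℕ) : ℝ := ((n : ℝ) + 1) ^ (-(3/2) : ℝ)

lemma u_eq (n : ℕ) : u n = 1 / (((n : ℝ) + 1) * Real.sqrt ((n : ℝ) + 1)) := by
  rw [u, Real.rpow_neg (by positivity), show (3/2 : ℝ) = 1 + 1/2 by norm_num,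
    Real.rpow_add (by positivity), Real.rpow_one, ← Real.sqrt_eq_rpow, one_div]

lemma summable_u : Summable u := by
  have h : Summable (fun n : ℕ => (n : ℝ) ^ (-(3/2) : ℝ)) :=
    Real.summable_nat_rpow.mpr (by norm_num)
  have h2 := (summable_nat_add_iff 1).mpr h
  refine h2.congr fun n => ?_
  rw [u]
  push_cast
  ring_nf

lemma cat_bound {y : ℝ} (hy : y ∈ Set.Icc (0:ℝ) (1/4)) (n : ℕ) :
    ‖(catalan n : ℝ) * y ^ n‖ ≤ u n := by
  obtain ⟨hy0, hy1⟩ := hy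
  rw [Real.norm_eq_abs, abs_of_nonneg (by positivity)]
  have h1 : (catalan n : ℝ) * y ^ n ≤ (catalan n : ℝ) * (1/4) ^ n := by
    gcongr
  have h2 : (catalan n : ℝ) * (1/4) ^ n = (catalan n : ℝ) / 4 ^ n := by
    rw [div_pow]; ring
  have h3 : cb n / ((n:ℝ)+1) ≤ u n := by
    rw [u_eq]
    have h4 : Real.sqrt ((n:ℝ)+1) ≤ (n:ℝ)+1 := by
      nth_rewrite 2 [show ((n:ℝ)+1) = Real.sqrt (((n:ℝ)+1)^2) from (Real.sqrt_sq (by positivity)).symm]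
      apply Real.sqrt_le_sqrt
      nlinarith [Nat.cast_nonneg (α := ℝ) n]
    have h5 := cb_le n
    rw [div_le_div_iff₀ (by positivity) (by positivity)]
    have hsq : Real.sqrt ((n:ℝ)+1) ≠ 0 := by positivity
    calc cb n * (((n:ℝ)+1) * Real.sqrt ((n:ℝ)+1))
        ≤ (1 / Real.sqrt ((n:ℝ)+1)) * (((n:ℝ)+1) * Real.sqrt ((n:ℝ)+1)) := by
          apply mul_le_mul_of_nonneg_right h5 (by positivity)
      _ = ((n:ℝ)+1) := by field_simp
      _ ≤ 1 * ((n:ℝ)+1) := by rw [one_mul]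
  calc (catalan n : ℝ) * y ^ n ≤ (catalan n : ℝ) / 4 ^ n := h2 ▸ h1
    _ = cb n / ((n:ℝ)+1) := catalan_div4 n
    _ ≤ u n := h3

lemma summable_cat {y : ℝ} (hy : y ∈ Set.Icc (0:ℝ) (1/4)) :
    Summable (fun n => (catalan n : ℝ) * y ^ n) := by
  apply Summable.of_norm
  exact Summable.of_nonneg_of_le (fun n => norm_nonneg _) (cat_bound hy) summable_u

/-- the Catalan generating function -/
noncomputable def G (y : ℝ) : ℝ := ∑' n, (catalan n : ℝ) * y ^ n

lemma contG : ContinuousOn G (Set.Icc (0:ℝ) (1/4)) := by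
  apply continuousOn_tsum (fun i => (by fun_prop : Continuous fun y : ℝ => (catalan i : ℝ) * y ^ i).continuousOn)
    summable_u
  intro n x hx
  exact cat_bound hx n

lemma G_zero : G 0 = 1 := by
  rw [G, tsum_eq_single 0 (fun n hn => by simp [zero_pow hn])]
  simp

lemma G_eq {y : ℝ} (hy : y ∈ Set.Icc (0:ℝ) (1/4)) : G y = 1 + y * G y ^ 2 := by
  have hnorm : Summable fun n => ‖(catalan n : ℝ) * y ^ n‖ :=
    Summable.of_nonneg_of_le (fun n => norm_nonneg _) (cat_bound hy) summable_u
  have hmul := tsum_mul_tsum_eq_tsum_sum_range_of_summable_norm hnorm hnorm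
  have inner : ∀ n : ℕ, (∑ k ∈ Finset.range (n + 1),
      ((catalan k : ℝ) * y ^ k) * ((catalan (n - k) : ℝ) * y ^ (n - k)))
      = (catalan (n + 1) : ℝ) * y ^ n := by
    intro n
    have : ∀ k ∈ Finset.range (n + 1),
        ((catalan k : ℝ) * y ^ k) * ((catalan (n - k) : ℝ) * y ^ (n - k))
        = ((catalan k * catalan (n - k) : ℕ) : ℝ) * y ^ n := by
      intro k hk
      have hkn : k ≤ n := Nat.lt_succ_iff.mp (Finset.mem_range.mp hk)
      push_cast
      rw [mul_mul_mul_comm, ← pow_add, Nat.add_sub_cancel' hkn]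
    rw [Finset.sum_congr rfl this, ← Finset.sum_mul, ← Nat.cast_sum]
    congr 2
    rw [catalan_succ n, ← Fin.sum_univ_eq_sum_range (fun k => catalan k * catalan (n - k)) (n+1)]
  have hsq : G y * G y = ∑' n, (catalan (n + 1) : ℝ) * y ^ n := by
    rw [G, hmul]
    exact tsum_congr inner
  have hsummable : Summable (fun n => (catalan n : ℝ) * y ^ n) := summable_cat hy
  have hshift := Summable.tsum_eq_zero_add hsummable
  have hmul2 : ∑' n : ℕ, (catalan (n + 1) : ℝ) * y ^ (n + 1)
      = y * ∑' n : ℕ, (catalan (n + 1) : ℝ) * y ^ n := by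
    rw [← tsum_mul_left]
    exact tsum_congr fun n => by ring
  have hGy : G y = 1 + y * (G y * G y) := by
    conv_lhs => rw [G, hshift]
    rw [hmul2, hsq]
    simp
  exact hGy.trans (by ring)

lemma G_sqrt {y : ℝ} (hy : y ∈ Set.Icc (0:ℝ) (1/4)) :
    2 * y * G y - 1 = -Real.sqrt (1 - 4 * y) := by
  set s : ℝ → ℝ := fun y => 2 * y * G y - 1 with hs
  have hcont : ContinuousOn s (Set.Icc (0:ℝ) (1/4)) := by
    apply ContinuousOn.sub
    · exact ContinuousOn.mul (by fun_prop) contG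
    · exact continuousOn_const
  have hsq : ∀ z ∈ Set.Icc (0:ℝ) (1/4), s z ^ 2 = 1 - 4 * z := by
    intro z hz
    have h := G_eq hz
    simp only [hs]
    nlinarith [h]
  have hnonpos : ∀ z ∈ Set.Icc (0:ℝ) (1/4), s z ≤ 0 := by
    intro z hz
    by_contra hpos
    push_neg at hpos
    have hs0 : s 0 = -1 := by simp [hs, G_zero]
    have hsub : Set.Icc (0:ℝ) z ⊆ Set.Icc (0:ℝ) (1/4) := Set.Icc_subset_Icc le_rfl hz.2
    have hivt := intermediate_value_Icc hz.1 (hcont.mono hsub)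
    have h0mem : (0:ℝ) ∈ Set.Icc (s 0) (s z) := by
      rw [hs0]; constructor <;> [norm_num; exact hpos.le]
    obtain ⟨c, hc, hsc⟩ := hivt h0mem
    have hc' : c ∈ Set.Icc (0:ℝ) (1/4) := hsub hc
    have : (1:ℝ) - 4 * c = 0 := by rw [← hsq c hc', hsc]; ring
    have hc14 : c = 1/4 := by linarith
    have hz14 : z = 1/4 := le_antisymm hz.2 (hc14 ▸ hc.2)
    rw [hz14, ← hc14, hsc] at hpos
    exact lt_irrefl 0 hpos
  have h1 : s y ^ 2 = Real.sqrt (1 - 4 * y) ^ 2 := by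
    rw [Real.sq_sqrt (by linarith [hy.2])]
    exact hsq y hy
  have h2 := hnonpos y hy
  have h3 : (0:ℝ) ≤ Real.sqrt (1 - 4 * y) := Real.sqrt_nonneg _
  have h4 : (s y - Real.sqrt (1 - 4*y)) * (s y + Real.sqrt (1 - 4*y)) = 0 := by
    nlinarith [h1]
  rcases mul_eq_zero.mp h4 with h | h
  · have : s y = Real.sqrt (1 - 4*y) := by linarith
    have h5 : Real.sqrt (1 - 4*y) = 0 := le_antisymm (this ▸ h2) h3
    show s y = -Real.sqrt (1 - 4*y)
    rw [h5, this, h5]; ring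
  · show s y = -Real.sqrt (1 - 4*y)
    linarith

lemma G_val {y : ℝ} (hy0 : 0 < y) (hy1 : y ≤ 1/4) :
    G y = (1 - Real.sqrt (1 - 4 * y)) / (2 * y) := by
  have h := G_sqrt (Set.mem_Icc.mpr ⟨hy0.le, hy1⟩)
  field_simp
  linarith

lemma tsumF {θ : ℝ} (hθ1 : 0 < θ) (hθ2 : θ ≤ π/2) :
    (∑' n, (catalan n : ℝ) / 4 ^ n * Real.sin θ ^ (2 * n)) = 2 / (1 + Real.cos θ) := by
  have hs : 0 < Real.sin θ := Real.sin_pos_of_pos_of_lt_pi hθ1 (by linarith [Real.pi_pos])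
  have hc : 0 ≤ Real.cos θ := Real.cos_nonneg_of_mem_Icc ⟨by linarith [Real.pi_pos], hθ2⟩
  set y : ℝ := Real.sin θ ^ 2 / 4 with hy
  have h1 : ∀ n, (catalan n : ℝ) / 4 ^ n * Real.sin θ ^ (2 * n) = (catalan n : ℝ) * y ^ n := by
    intro n
    rw [hy, div_pow, pow_mul]
    ring
  rw [tsum_congr h1]
  have hsin1 : Real.sin θ ^ 2 ≤ 1 := Real.sin_sq_le_one θ
  have hy0 : 0 < y := by positivity
  have hy1 : y ≤ 1/4 := by rw [hy]; linarith
  have hGv := G_val hy0 hy1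
  rw [show (∑' n, (catalan n : ℝ) * y ^ n) = G y from rfl, hGv]
  have hcos2 : 1 - 4 * y = Real.cos θ ^ 2 := by
    rw [hy, Real.cos_sq']; ring
  rw [hcos2, Real.sqrt_sq hc, hy]
  have hpc : (0:ℝ) < 1 + Real.cos θ := by linarith
  have hsin0 : Real.sin θ ≠ 0 := ne_of_gt hs
  field_simp
  nlinarith [Real.sin_sq_add_cos_sq θ]

lemma int2 : (∫ x in (0:ℝ)..(π/2), 2 / (1 + Real.cos x)) = 2 := by
  have key : ∀ x ∈ Set.uIcc (0:ℝ) (π/2),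
      HasDerivAt (fun x : ℝ => 2 * Real.tan (x / 2)) (2 / (1 + Real.cos x)) x := by
    intro x hx
    rw [Set.uIcc_of_le (by positivity)] at hx
    have hccos : 0 < Real.cos (x / 2) := by
      apply Real.cos_pos_of_mem_Ioo
      constructor
      · linarith [hx.1, Real.pi_pos]
      · linarith [hx.2, Real.pi_pos]
    have htan := Real.hasDerivAt_tan (ne_of_gt hccos)
    have hhalf : HasDerivAt (fun x : ℝ => x / 2) (1/2) x := by
      simpa using (hasDerivAt_id x).div_const 2
    have hcomp := (htan.comp x hhalf).const_mul 2
    refine hcomp.congr_deriv ?_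
    have hcos_half : Real.cos (x/2) ^ 2 = (1 + Real.cos x) / 2 := by
      rw [Real.cos_sq, show 2 * (x/2) = x by ring]
      ring
    have h1c : (0:ℝ) < 1 + Real.cos x := by nlinarith [hcos_half, hccos]
    rw [hcos_half]
    field_simp
  have hint : IntervalIntegrable (fun x => 2 / (1 + Real.cos x)) MeasureTheory.volume 0 (π/2) := by
    apply ContinuousOn.intervalIntegrable
    apply ContinuousOn.div continuousOn_const (by fun_prop)
    intro x hx
    rw [Set.uIcc_of_le (by positivity)] at hx
    have : 0 ≤ Real.cos x := Real.cos_nonneg_of_mem_Icc ⟨by linarith [hx.1, Real.pi_pos], hx.2⟩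
    intro h
    linarith
  have := intervalIntegral.integral_eq_sub_of_hasDerivAt key hint
  rw [this, show π/2/2 = π/4 by ring]
  norm_num [Real.tan_pi_div_four]

lemma c_le_u (n : ℕ) : cb n ^ 2 / ((n:ℝ)+1) ≤ u n := by
  have hs1 : (1:ℝ) ≤ Real.sqrt ((n:ℝ)+1) := by
    have := Real.sqrt_le_sqrt (show (1:ℝ) ≤ (n:ℝ)+1 by linarith [Nat.cast_nonneg (α := ℝ) n])
    rwa [Real.sqrt_one] at this
  have hsqpos : (0:ℝ) < Real.sqrt ((n:ℝ)+1) := by linarith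
  have hcb1 : cb n ≤ 1 := (cb_le n).trans (by rw [div_le_one hsqpos]; exact hs1)
  have hcbsq : cb n ^ 2 ≤ 1 / Real.sqrt ((n:ℝ)+1) := by
    nlinarith [cb_le n, cb_nonneg n]
  rw [u_eq, div_le_div_iff₀ (by positivity) (by positivity)]
  calc cb n ^ 2 * (((n:ℝ)+1) * Real.sqrt ((n:ℝ)+1))
      ≤ (1 / Real.sqrt ((n:ℝ)+1)) * (((n:ℝ)+1) * Real.sqrt ((n:ℝ)+1)) :=
        mul_le_mul_of_nonneg_right hcbsq (by positivity)
    _ = ((n:ℝ)+1) := by field_simp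
    _ = 1 * ((n:ℝ)+1) := (one_mul _).symm

lemma key : HasSum (fun n : ℕ => cb n ^ 2 / ((n:ℝ)+1)) (4/π) := by
  have hπ : (0:ℝ) < π := Real.pi_pos
  set F : ℕ → ℝ → ℝ := fun n θ => (catalan n : ℝ) / 4 ^ n * Real.sin θ ^ (2*n) with hF
  have hFcont : ∀ n, Continuous (F n) := fun n => by rw [hF]; fun_prop
  have hFnonneg : ∀ n θ, 0 ≤ F n θ := fun n θ => by
    rw [hF]
    have := (even_two_mul n).pow_nonneg (Real.sin θ)
    positivity
  have hIF : ∀ n, (∫ θ in Set.Ioc (0:ℝ) (π/2), F n θ) = π/2 * (cb n ^ 2 / ((n:ℝ)+1)) := by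
    intro n
    rw [← intervalIntegral.integral_of_le (by positivity : (0:ℝ) ≤ π/2), hF]
    simp only
    rw [intervalIntegral.integral_const_mul, wallis, catalan_div4]
    ring
  have hInt : ∀ n, MeasureTheory.IntegrableOn (F n) (Set.Ioc (0:ℝ) (π/2)) := fun n =>
    (hFcont n).integrableOn_Ioc
  have hnormint : ∀ n, (∫ θ in Set.Ioc (0:ℝ) (π/2), ‖F n θ‖) = π/2 * (cb n ^ 2 / ((n:ℝ)+1)) := by
    intro n
    have heqn : (fun θ => ‖F n θ‖) = F n := funext fun θ => by
      rw [Real.norm_eq_abs, abs_of_nonneg (hFnonneg n θ)]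
    rw [heqn, hIF]
  have hsummable : Summable (fun n => ∫ θ in Set.Ioc (0:ℝ) (π/2), ‖F n θ‖) := by
    simp only [hnormint]
    apply Summable.mul_left
    exact Summable.of_nonneg_of_le (fun n => by positivity) c_le_u summable_u
  have hswap := MeasureTheory.hasSum_integral_of_summable_integral_norm hInt hsummable
  have heq : (∫ θ in Set.Ioc (0:ℝ) (π/2), ∑' n, F n θ)
      = ∫ θ in Set.Ioc (0:ℝ) (π/2), 2/(1+Real.cos θ) := by
    apply MeasureTheory.setIntegral_congr_fun measurableSet_Ioc
    intro θ hθ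
    exact tsumF hθ.1 (hθ.2)
  have hval : (∫ θ in Set.Ioc (0:ℝ) (π/2), 2/(1+Real.cos θ)) = 2 := by
    rw [← intervalIntegral.integral_of_le (by positivity : (0:ℝ) ≤ π/2)]
    exact int2
  rw [heq, hval] at hswap
  simp only [hIF] at hswap
  have h4 := hswap.mul_left (2/π)
  have h6 : (fun n => (2/π) * (π/2 * (cb n ^ 2 / ((n:ℝ)+1)))) = fun n => cb n ^ 2 / ((n:ℝ)+1) := by
    funext n
    field_simp
  rw [h6] at h4
  convert h4 using 1
  · rfl
  ring

end Stmt5Aux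


theorem stmt5 : (∑' j : ℕ, gbinom (1/2) j ^ 2 * (j : ℝ)) = 1 / π := by
  open Stmt5Aux in
  have hkey := key
  have h2 := hkey.div_const 4
  have h3 : (fun n : ℕ => gbinom (1/2) (n+1) ^ 2 * ((n+1 : ℕ) : ℝ))
      = fun n : ℕ => (cb n ^ 2 / ((n:ℝ)+1)) / 4 := by
    funext n
    have h4 : ((-1:ℝ)^n)^2 = 1 := by rw [← pow_mul, mul_comm, pow_mul]; norm_num
    rw [gbinom_formula n, cb, div_pow, mul_pow, h4, one_mul]
    push_cast
    have h5 : ((n:ℝ)+1) ≠ 0 := by positivity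
    have h6 : ((4:ℝ)^n) ≠ 0 := by positivity
    field_simp
    ring
  rw [← h3] at h2
  have h7 : HasSum (fun n : ℕ => gbinom (1/2) (n+1) ^ 2 * ((n+1 : ℕ) : ℝ)) (1/π) := by
    convert h2 using 1
    · rfl
    have : π ≠ 0 := Real.pi_ne_zero
    field_simp
  have h8 := (hasSum_nat_add_iff (f := fun j : ℕ => gbinom (1/2) j ^ 2 * (j : ℝ)) 1).mp h7
  simp only [Finset.range_one, Finset.sum_singleton, Nat.cast_zero, mul_zero, add_zero] at h8
  exact h8.tsum_eq
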